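/- Let n ≥ 2 be an integer and let p ∈ (0,1), δ ∈ (0,1), r < 0. Set ξ = (1−δp)/(δ(1−p)) and define V^1 = r(ξ^{n−1}−1)/(ξ^n−1) and V^k = r(1 − (ξ−1)ξ^{k−2}/(ξ^n−1)) for k = 2,…,n. Then r < V^2 < V^3 < ⋯ < V^n < V^1 < 0; that is, V^2 > r, V^k < V^{k+1} for each k = 2,…,n−1, V^n < V^1, and V^1 < 0. -/

import Mathlib

/-- Ordering of the closed-form solution of the desirable-task cyclic rotation
system with `r < 0`: `r < V² < V³ < ⋯ < Vⁿ < V¹ < 0`. -/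
theorem stmt_14 (n : ℕ) (hn : 2 ≤ n) (p δ r : ℝ)
    (hp : p ∈ Set.Ioo (0 : ℝ) 1) (hδ : δ ∈ Set.Ioo (0 : ℝ) 1) (hr : r < 0)
    (ξ : ℝ) (hξ : ξ = (1 - δ * p) / (δ * (1 - p)))
    (V : ℕ → ℝ)
    (hV1 : V 1 = r * (ξ ^ (n - 1) - 1) / (ξ ^ n - 1))
    (hVk : ∀ k, 2 ≤ k → k ≤ n →
        V k = r * (1 - (ξ - 1) * ξ ^ (k - 2) / (ξ ^ n - 1))) :
    r < V 2 ∧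
    (∀ k, 2 ≤ k → k ≤ n - 1 → V k < V (k + 1)) ∧
    V n < V 1 ∧ V 1 < 0 := by
  obtain ⟨hp0, hp1⟩ := hp
  obtain ⟨hd0, hd1⟩ := hδ
  have hp1' : 0 < 1 - p := by linarith
  have hdp : 0 < δ * (1 - p) := by positivity
  have hξ1 : 1 < ξ := by
    rw [hξ, lt_div_iff₀ hdp]; nlinarith
  have hxpos : 0 < ξ := by linarith
  have hx1 : 0 < ξ - 1 := by linarith
  obtain ⟨m, rfl⟩ : ∃ m, n = m + 2 := ⟨n - 2, by omega⟩
  have hD : 0 < ξ ^ (m + 2) - 1 := by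
    have h := one_lt_pow₀ hξ1 (n := m + 2) (by omega)
    linarith
  have hxm : 0 < ξ ^ m := pow_pos hxpos m
  have hnr : 0 < -r := by linarith
  refine ⟨?_, ?_, ?_, ?_⟩
  · rw [hVk 2 le_rfl (by omega)]
    have ht : 0 < (ξ - 1) * ξ ^ (2 - 2) / (ξ ^ (m + 2) - 1) := by
      simp only [show (2:ℕ) - 2 = 0 from rfl, pow_zero]
      positivity
    nlinarith [mul_pos hnr ht]
  · intro k hk2 hkn
    obtain ⟨j, rfl⟩ : ∃ j, k = j + 2 := ⟨k - 2, by omega⟩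
    rw [hVk (j + 2) (by omega) (by omega), hVk (j + 2 + 1) (by omega) (by omega)]
    simp only [show j + 2 - 2 = j from rfl, show j + 2 + 1 - 2 = j + 1 from rfl]
    have hab : (ξ - 1) * ξ ^ j / (ξ ^ (m + 2) - 1)
        < (ξ - 1) * ξ ^ (j + 1) / (ξ ^ (m + 2) - 1) := by
      gcongr
      · omega
    nlinarith [mul_lt_mul_of_pos_left hab hnr]
  · rw [hVk (m + 2) (by omega) le_rfl, hV1]
    simp only [show m + 2 - 2 = m from rfl, show m + 2 - 1 = m + 1 from rfl]
    have key : r * (1 - (ξ - 1) * ξ ^ m / (ξ ^ (m + 2) - 1))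
        = r * ((ξ ^ (m + 2) - 1) - (ξ - 1) * ξ ^ m) / (ξ ^ (m + 2) - 1) := by
      field_simp
    rw [key, div_lt_div_iff₀ hD hD]
    have hsq : 0 < (ξ - 1) ^ 2 := by positivity
    have hD' : 0 < ξ ^ m * ξ * ξ - 1 := by
      have : ξ ^ (m + 2) = ξ ^ m * ξ * ξ := by ring
      linarith [this ▸ hD]
    rw [show (m + 2 : ℕ) = m + 1 + 1 from rfl, pow_succ, pow_succ]
    nlinarith [mul_pos (mul_pos (mul_pos hnr hD') hxm) hsq]
  · rw [hV1]
    simp only [show m + 2 - 1 = m + 1 from rfl]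
    apply div_neg_of_neg_of_pos _ hD
    have h := one_lt_pow₀ hξ1 (n := m + 1) (by omega)
    nlinarith
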